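/- Let a > 0 and let α be irrational. Then there exist infinitely many N ∈ ℕ such that |{n ≤ N : ∃ m ∈ ℤ, |α - m/n| < a/n^{3/2}}| ≥ 5^{1/4}a^{1/2}N^{1/4}/2. -/

import Mathlib

lemma aux_finite (α : ℝ) (M : ℕ) : {q : ℚ | |α - q| < 1 ∧ q.den ≤ M}.Finite := by
  set C : ℤ := ⌈(|α| + 1) * M⌉ with hC
  apply Set.Finite.of_finite_image (f := fun q : ℚ => (q.num, q.den))
  · apply Set.Finite.subset (((Set.finite_Icc (-C) C).prod (Set.finite_Icc 0 M)))
    rintro ⟨x, y⟩ ⟨q, ⟨hq1, hq2⟩, heq⟩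
    obtain ⟨rfl, rfl⟩ : q.num = x ∧ q.den = y := by
      simpa [Prod.ext_iff] using heq
    have hd : (1:ℝ) ≤ (q.den : ℝ) := by exact_mod_cast q.pos
    have hdM : (q.den : ℝ) ≤ M := by exact_mod_cast hq2
    have hq : |(q:ℝ)| ≤ |α| + 1 := by
      have := abs_sub_abs_le_abs_sub (q:ℝ) α
      rw [abs_sub_comm] at hq1
      linarith
    have hnum : |(q.num : ℝ)| ≤ (|α| + 1) * M := by
      have h2 : (q.num : ℝ) = (q:ℝ) * q.den := by
        rw [← Rat.cast_intCast, ← Rat.cast_natCast, ← Rat.cast_mul]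
        norm_cast
        exact (Rat.mul_den_eq_num q).symm
      rw [h2, abs_mul, abs_of_nonneg (by positivity : (0:ℝ) ≤ (q.den:ℝ))]
      have hα1 : (0:ℝ) ≤ |α| + 1 := by positivity
      calc |(q:ℝ)| * q.den ≤ (|α|+1) * q.den := by
            exact mul_le_mul_of_nonneg_right hq (by positivity)
        _ ≤ (|α|+1) * M := by exact mul_le_mul_of_nonneg_left hdM hα1
    have : |q.num| ≤ C := by
      have h3 : ((|q.num| : ℤ) : ℝ) ≤ ((C:ℤ) : ℝ) := by
        rw [Int.cast_abs]
        exact hnum.trans (Int.le_ceil _)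
      exact_mod_cast h3
    exact ⟨Set.mem_Icc.2 (abs_le.1 this), Set.mem_Icc.2 ⟨Nat.zero_le _, hq2⟩⟩
  · intro q _ q' _ h
    simp only [Prod.mk.injEq] at h
    exact Rat.ext h.1 h.2

lemma aux_unbdd {α : ℝ} (hα : Irrational α) (M : ℕ) :
    ∃ q : ℚ, |α - (q:ℝ)| < 1 / (q.den : ℝ) ^ 2 ∧ M < q.den := by
  by_contra h
  push_neg at h
  have hS := Real.infinite_rat_abs_sub_lt_one_div_den_sq_of_irrational hα
  refine hS ((aux_finite α M).subset ?_)
  rintro q hq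
  have hd : (1:ℝ) ≤ (q.den : ℝ) := by exact_mod_cast q.pos
  refine ⟨lt_of_lt_of_le hq ?_, h q hq⟩
  rw [div_le_one (by positivity)]
  nlinarith

theorem stmt_11 (a : ℝ) (ha : 0 < a) (α : ℝ) (hα : Irrational α) :
    {N : ℕ | 0 < N ∧
      (5:ℝ) ^ ((1:ℝ)/4) * a ^ ((1:ℝ)/2) * (N : ℝ) ^ ((1:ℝ)/4) / 2 ≤
        ({n : ℕ | 0 < n ∧ n ≤ N ∧
            ∃ m : ℤ, |α - (m : ℝ) / n| < a / (n : ℝ) ^ ((3:ℝ)/2)}.ncard :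
          ℝ)}.Infinite := by
  apply Set.infinite_of_forall_exists_gt
  intro B
  obtain ⟨q, hq, hden⟩ := aux_unbdd hα (max B ⌈(64:ℝ)/a^2⌉₊)
  set d : ℕ := q.den with hd_def
  have hdB : B < d := lt_of_le_of_lt (le_max_left _ _) hden
  have hd1 : 1 ≤ d := q.pos
  have hdR : (1:ℝ) ≤ (d:ℝ) := by exact_mod_cast hd1
  have hdpos : (0:ℝ) < (d:ℝ) := by linarith
  have hd64 : (64:ℝ) ≤ a^2 * d := by
    have h1 : (64:ℝ)/a^2 ≤ (d:ℝ) := by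
      calc (64:ℝ)/a^2 ≤ (⌈(64:ℝ)/a^2⌉₊ : ℝ) := Nat.le_ceil _
        _ ≤ (d:ℝ) := by
            exact_mod_cast le_of_lt (lt_of_le_of_lt (le_max_right _ _) hden)
    rw [div_le_iff₀ (by positivity)] at h1
    linarith
  set x : ℝ := (a^2 * (d:ℝ)) ^ ((1:ℝ)/3) with hx_def
  have hxpos : 0 < x := by positivity
  have hx3 : x ^ (3:ℕ) = a^2 * d := by
    rw [hx_def, ← Real.rpow_natCast (((a^2 * (d:ℝ)) ^ ((1:ℝ)/3))) 3,
      ← Real.rpow_mul (by positivity)]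
    norm_num
  have hx4 : (4:ℝ) ≤ x := by
    nlinarith [hx3, hxpos, sq_nonneg (x - 4), sq_nonneg (x + 4)]
  set K : ℕ := ⌊x⌋₊ with hK_def
  have hKx : (K:ℝ) ≤ x := Nat.floor_le (le_of_lt hxpos)
  have hxK : x - 1 < (K:ℝ) := Nat.sub_one_lt_floor x
  have hK1 : 1 ≤ K := Nat.le_floor (by push_cast; linarith)
  set N : ℕ := K * d with hN_def
  have hNpos : 0 < N := Nat.mul_pos hK1 hd1
  have hBN : B < N := lt_of_lt_of_le hdB (Nat.le_mul_of_pos_left d hK1)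
  -- key identity 1 : (x*d)^(3/2) = a * d^2
  have hid1 : (x * d) ^ ((3:ℝ)/2) = a * (d:ℝ)^2 := by
    have h0 : (0:ℝ) ≤ x * d := by positivity
    refine (pow_left_inj₀ (Real.rpow_nonneg h0 _) (by positivity) (two_ne_zero)).1 ?_
    rw [← Real.rpow_natCast ((x*(d:ℝ)) ^ ((3:ℝ)/2)) 2, ← Real.rpow_mul h0]
    norm_num
    rw [mul_pow, hx3]
    ring
  -- key identity 2 : a^(1/2) * (x*d)^(1/4) = x
  have hid2 : a ^ ((1:ℝ)/2) * (x * d) ^ ((1:ℝ)/4) = x := by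
    have h0 : (0:ℝ) ≤ x * d := by positivity
    refine (pow_left_inj₀ (by positivity) (le_of_lt hxpos) (by norm_num : (12:ℕ) ≠ 0)).1 ?_
    rw [mul_pow, ← Real.rpow_natCast (a ^ ((1:ℝ)/2)) 12, ← Real.rpow_mul (le_of_lt ha),
      ← Real.rpow_natCast ((x*(d:ℝ)) ^ ((1:ℝ)/4)) 12, ← Real.rpow_mul h0]
    norm_num
    rw [show (12:ℕ) = 3 * 4 by norm_num, pow_mul, mul_pow, hx3]
    ring
  refine ⟨N, ⟨hNpos, ?_⟩, hBN⟩
  -- counting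
  set S : Set ℕ := {n : ℕ | 0 < n ∧ n ≤ N ∧
      ∃ m : ℤ, |α - (m : ℝ) / n| < a / (n : ℝ) ^ ((3:ℝ)/2)} with hS_def
  have hsub : (fun k => k * d) '' (Set.Icc 1 K) ⊆ S := by
    rintro n ⟨k, hk, rfl⟩
    rw [Set.mem_Icc] at hk
    obtain ⟨hk1, hkK⟩ := hk
    have hkpos : (0:ℝ) < (k:ℝ) := by exact_mod_cast hk1
    have hnpos : 0 < k * d := Nat.mul_pos hk1 hd1
    have hnR : (0:ℝ) < ((k*d : ℕ):ℝ) := by exact_mod_cast hnpos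
    refine ⟨hnpos, Nat.mul_le_mul_right d hkK, ⟨(k:ℤ) * q.num, ?_⟩⟩
    have hcast : (((k:ℤ) * q.num : ℤ):ℝ) / ((k*d : ℕ):ℝ) = (q:ℝ) := by
      push_cast
      rw [mul_div_mul_left _ _ (ne_of_gt hkpos), Rat.cast_def]
    rw [hcast]
    refine hq.trans_le ?_
    rw [div_le_div_iff₀ (by positivity) (Real.rpow_pos_of_pos hnR _)]
    rw [one_mul]
    calc ((k*d : ℕ):ℝ) ^ ((3:ℝ)/2) ≤ (x * d) ^ ((3:ℝ)/2) := by
          apply Real.rpow_le_rpow (le_of_lt hnR) _ (by norm_num)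
          push_cast
          have : (k:ℝ) ≤ x := le_trans (by exact_mod_cast hkK) hKx
          exact mul_le_mul_of_nonneg_right this (le_of_lt hdpos)
      _ = a * (d:ℝ)^2 := hid1
  have hfin : S.Finite := (Set.finite_Icc 0 N).subset (fun n hn => Set.mem_Icc.2 ⟨Nat.zero_le _, hn.2.1⟩)
  have himg : ((fun k => k * d) '' (Set.Icc 1 K)).ncard = K := by
    rw [Set.ncard_image_of_injective _ (fun k1 k2 h =>
      Nat.eq_of_mul_eq_mul_right hd1 h)]
    rw [show (Set.Icc 1 K) = ↑(Finset.Icc 1 K) by simp, Set.ncard_coe_finset,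
      Nat.card_Icc]
    omega
  have hcard : (K:ℝ) ≤ (S.ncard : ℝ) := by
    exact_mod_cast himg ▸ Set.ncard_le_ncard hsub hfin
  refine le_trans ?_ hcard
  -- (5)^(1/4) * a^(1/2) * N^(1/4) / 2 ≤ K
  have hN14 : ((N:ℕ):ℝ) ^ ((1:ℝ)/4) ≤ (x * d) ^ ((1:ℝ)/4) := by
    apply Real.rpow_le_rpow (by positivity) _ (by norm_num)
    rw [hN_def]
    push_cast
    exact mul_le_mul_of_nonneg_right hKx (le_of_lt hdpos)
  have h5 : (5:ℝ) ^ ((1:ℝ)/4) ≤ 3/2 := by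
    have h1 : ((3/2:ℝ)^(4:ℕ)) ^ ((1:ℝ)/4) = 3/2 := by
      rw [← Real.rpow_natCast (3/2:ℝ) 4, ← Real.rpow_mul (by norm_num)]
      norm_num
    calc (5:ℝ) ^ ((1:ℝ)/4) ≤ ((3/2:ℝ)^(4:ℕ)) ^ ((1:ℝ)/4) := by
          apply Real.rpow_le_rpow (by norm_num) (by norm_num) (by norm_num)
      _ = 3/2 := h1
  have hstep : (5:ℝ) ^ ((1:ℝ)/4) * a ^ ((1:ℝ)/2) * ((N:ℕ):ℝ) ^ ((1:ℝ)/4) / 2 ≤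
      (3/2) * x / 2 := by
    have ha12 : (0:ℝ) ≤ a ^ ((1:ℝ)/2) := Real.rpow_nonneg (le_of_lt ha) _
    have h2 : a ^ ((1:ℝ)/2) * ((N:ℕ):ℝ) ^ ((1:ℝ)/4) ≤ x := by
      calc a ^ ((1:ℝ)/2) * ((N:ℕ):ℝ) ^ ((1:ℝ)/4)
          ≤ a ^ ((1:ℝ)/2) * (x * d) ^ ((1:ℝ)/4) := by
            exact mul_le_mul_of_nonneg_left hN14 ha12
        _ = x := hid2
    have h3 : (0:ℝ) ≤ a ^ ((1:ℝ)/2) * ((N:ℕ):ℝ) ^ ((1:ℝ)/4) := by positivity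
    have h4 : (5:ℝ) ^ ((1:ℝ)/4) * (a ^ ((1:ℝ)/2) * ((N:ℕ):ℝ) ^ ((1:ℝ)/4)) ≤ (3/2) * x := by
      apply mul_le_mul h5 h2 h3 (by norm_num)
    linarith [h4]
  refine hstep.trans ?_
  linarith
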